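/- Let A ∈ ℝ^{m×n} with m ≤ n, let Θ ∈ ℝ^{n×n} be diagonal with strictly positive diagonal entries, and let R_d ∈ ℝ^{m×m} be symmetric positive definite. Then every strictly positive eigenvalue μ of the symmetric matrix M = [[−Θ^{-1}, Aᵀ],[A, R_d]] satisfies μ ≥ (1/2) ( (λ_min(R_d) − max_j (Θ^{-1})_{jj}) + [ (max_j (Θ^{-1})_{jj} + λ_min(R_d))² + 4 σ_min(A)² ]^{1/2} ). In particular this lower-bounds the smallest positive eigenvalue μ_1 of M. -/

import Mathlib

open Matrix

/-- Rayleigh-type lower bound: quadratic form is at least (min eigenvalue) * ‖x‖². -/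
lemma rayleigh_aux {k : ℕ} {B : Matrix (Fin k) (Fin k) ℝ} (hB : B.IsHermitian)
    (x : Fin k → ℝ) : (⨅ i, hB.eigenvalues i) * (x ⬝ᵥ x) ≤ x ⬝ᵥ (B *ᵥ x) := by
  rcases Nat.eq_zero_or_pos k with hk | hk
  · subst hk
    simp [dotProduct]
  · haveI : NeZero k := ⟨hk.ne'⟩
    set c := ⨅ i, hB.eigenvalues i with hc
    have hci : ∀ i, c ≤ hB.eigenvalues i := fun i =>
      ciInf_le (Set.Finite.bddBelow (Set.finite_range _)) i
    have hU : (hB.eigenvectorUnitary : Matrix (Fin k) (Fin k) ℝ) *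
        star (hB.eigenvectorUnitary : Matrix (Fin k) (Fin k) ℝ) = 1 :=
      (Matrix.mem_unitaryGroup_iff).mp hB.eigenvectorUnitary.2
    have hdiag : Matrix.diagonal (fun i => hB.eigenvalues i - c) =
        Matrix.diagonal (RCLike.ofReal ∘ hB.eigenvalues) -
          c • (1 : Matrix (Fin k) (Fin k) ℝ) := by
      rw [RCLike.ofReal_real_eq_id, Function.id_comp]
      ext i j
      by_cases h : i = j
      · subst h
        simp [Matrix.diagonal_apply_eq, Matrix.one_apply_eq]
      · simp [Matrix.diagonal_apply_ne _ h, Matrix.one_apply_ne h]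
    have key : B - c • 1 = (hB.eigenvectorUnitary : Matrix (Fin k) (Fin k) ℝ) *
        (Matrix.diagonal (fun i => hB.eigenvalues i - c)) *
        star (hB.eigenvectorUnitary : Matrix (Fin k) (Fin k) ℝ) := by
      rw [hdiag, Matrix.mul_sub, Matrix.sub_mul, Matrix.mul_smul, Matrix.mul_one,
        Matrix.smul_mul, hU]
      conv_lhs => rw [hB.spectral_theorem, Unitary.conjStarAlgAut_apply]
    have hps : (B - c • 1).PosSemidef := by
      rw [key, Matrix.star_eq_conjTranspose]
      exact (Matrix.posSemidef_diagonal_iff.mpr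
        fun i => sub_nonneg.mpr (hci i)).mul_mul_conjTranspose_same _
    have h0 : 0 ≤ x ⬝ᵥ ((B - c • (1 : Matrix (Fin k) (Fin k) ℝ)) *ᵥ x) := by
      have := hps.dotProduct_mulVec_nonneg x
      simpa using this
    have expand : x ⬝ᵥ ((B - c • (1 : Matrix (Fin k) (Fin k) ℝ)) *ᵥ x)
        = x ⬝ᵥ (B *ᵥ x) - c * (x ⬝ᵥ x) := by
      rw [Matrix.sub_mulVec, dotProduct_sub, Matrix.smul_mulVec, Matrix.one_mulVec,
        dotProduct_smul, smul_eq_mul]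
    linarith [expand ▸ h0]


/-- Smallest singular value of A (for m ≤ n): σ_min(A)² = λ_min(A Aᵀ). -/
noncomputable def sigMin {m n : ℕ} (A : Matrix (Fin m) (Fin n) ℝ) : ℝ :=
  Real.sqrt (⨅ i, (Matrix.isHermitian_mul_conjTranspose_self A).eigenvalues i)

/-- With `m ≤ n`, `Θ` diagonal positive and `R_d` symmetric positive definite, every
strictly positive eigenvalue `μ` of `M = [[−Θ⁻¹, Aᵀ],[A, R_d]]` satisfies
`μ ≥ ½((λ_min(R_d) − max_j (Θ⁻¹)_jj) + √((max_j (Θ⁻¹)_jj + λ_min(R_d))² + 4σ_min(A)²))`. -/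
theorem stmt_12 {m n : ℕ} (hmn : m ≤ n) (A : Matrix (Fin m) (Fin n) ℝ)
    (d : Fin n → ℝ) (hd : ∀ j, 0 < d j)
    (Rd : Matrix (Fin m) (Fin m) ℝ) (hRd : Rd.PosDef)
    (M : Matrix (Fin n ⊕ Fin m) (Fin n ⊕ Fin m) ℝ)
    (hMdef : M = Matrix.fromBlocks (-(Matrix.diagonal d)⁻¹) Aᵀ A Rd) :
    ∀ μ : ℝ, 0 < μ →
      ∀ x : Fin n ⊕ Fin m → ℝ, x ≠ 0 → M.mulVec x = μ • x →
      (1 / 2) * (((⨅ i, hRd.1.eigenvalues i) - ⨆ j, (Matrix.diagonal d)⁻¹ j j) +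
        Real.sqrt (((⨆ j, (Matrix.diagonal d)⁻¹ j j) + ⨅ i, hRd.1.eigenvalues i) ^ 2 +
          4 * sigMin A ^ 2)) ≤ μ := by
  intro μ hμ x hx heig
  have hdinv : (Matrix.diagonal d)⁻¹ = Matrix.diagonal (fun j => (d j)⁻¹) := by
    apply Matrix.inv_eq_right_inv
    rw [Matrix.diagonal_mul_diagonal]
    have h1 : (fun j => d j * (d j)⁻¹) = fun _ : Fin n => (1:ℝ) := by
      funext j; exact mul_inv_cancel₀ (hd j).ne'
    rw [h1, Matrix.diagonal_one]
  have he_pos : ∀ j : Fin n, (0:ℝ) < (d j)⁻¹ := fun j => inv_pos.mpr (hd j)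
  have hθe : ∀ j, (d j)⁻¹ ≤ ⨆ j, (Matrix.diagonal d)⁻¹ j j := by
    intro j
    have h1 : (Matrix.diagonal d)⁻¹ j j = (d j)⁻¹ := by rw [hdinv]; simp
    rw [← h1]
    exact le_ciSup (f := fun j => (Matrix.diagonal d)⁻¹ j j)
      (Set.Finite.bddAbove (Set.finite_range _)) j
  set θ := ⨆ j, (Matrix.diagonal d)⁻¹ j j with hθ
  set r := ⨅ i, hRd.1.eigenvalues i with hr
  -- handle m = 0
  rcases Nat.eq_zero_or_pos m with hm | hm
  · subst hm
    have hθ0 : 0 ≤ θ := by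
      rcases Nat.eq_zero_or_pos n with hn | hn
      · subst hn; rw [hθ, Real.iSup_of_isEmpty]
      · exact le_trans (he_pos ⟨0, hn⟩).le (hθe ⟨0, hn⟩)
    have hr0 : r = 0 := Real.iInf_of_isEmpty _
    have hs0 : sigMin A = 0 := by
      rw [sigMin, Real.iInf_of_isEmpty, Real.sqrt_zero]
    rw [hr0, hs0]
    have h2 : Real.sqrt ((θ + 0) ^ 2 + 4 * 0 ^ 2) = θ := by
      rw [add_zero]
      norm_num
      exact Real.sqrt_sq hθ0
    rw [h2]
    linarith
  -- main case m > 0 (hence n > 0)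
  have hn : 0 < n := lt_of_lt_of_le hm hmn
  have hθ0 : 0 < θ := lt_of_lt_of_le (he_pos ⟨0, hn⟩) (hθe ⟨0, hn⟩)
  rw [hMdef, Matrix.fromBlocks_mulVec] at heig
  have eq1 : ∀ j, (Aᵀ *ᵥ (x ∘ Sum.inr)) j = (x ∘ Sum.inl) j * (μ + (d j)⁻¹) := by
    intro j
    have h1 := congrFun heig (Sum.inl j)
    rw [hdinv] at h1
    simp only [Sum.elim_inl, Pi.add_apply, Matrix.neg_mulVec, Pi.neg_apply,
      Matrix.mulVec_diagonal, Function.comp_apply, Pi.smul_apply, smul_eq_mul] at h1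
    show (Aᵀ *ᵥ (x ∘ Sum.inr)) j = x (Sum.inl j) * (μ + (d j)⁻¹)
    linear_combination h1
  have eq2 : A *ᵥ (x ∘ Sum.inl) + Rd *ᵥ (x ∘ Sum.inr) = μ • (x ∘ Sum.inr) := by
    funext i
    have h1 := congrFun heig (Sum.inr i)
    simpa using h1
  set u : Fin n → ℝ := x ∘ Sum.inl with hu
  set v : Fin m → ℝ := x ∘ Sum.inr with hv
  set w : Fin n → ℝ := Aᵀ *ᵥ v with hw
  -- v ≠ 0
  have hvne : v ≠ 0 := by
    intro hv0
    apply hx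
    have hw0 : w = 0 := by rw [hw, hv0]; simp
    have hu0 : u = 0 := by
      funext j
      have h1 := eq1 j
      rw [hw0] at h1
      have hpos : 0 < μ + (d j)⁻¹ := by linarith [he_pos j]
      have h2 : u j * (μ + (d j)⁻¹) = 0 := by
        rw [← h1]; simp
      exact (mul_eq_zero.mp h2).resolve_right hpos.ne'
    funext i
    cases i with
    | inl j => exact congrFun hu0 j
    | inr i => exact congrFun hv0 i
  have hnv : 0 < v ⬝ᵥ v := by
    rcases lt_or_eq_of_le (Finset.sum_nonneg (fun i _ => mul_self_nonneg (v i)) :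
        (0:ℝ) ≤ v ⬝ᵥ v) with h | h
    · exact h
    · exact absurd (dotProduct_self_eq_zero.mp h.symm) hvne
  have hμθ : 0 < μ + θ := by linarith
  -- dot eq2 with v
  have key1 : w ⬝ᵥ u + v ⬝ᵥ (Rd *ᵥ v) = μ * (v ⬝ᵥ v) := by
    have h2 : v ⬝ᵥ (A *ᵥ u + Rd *ᵥ v) = v ⬝ᵥ (μ • v) := by rw [eq2]
    rw [dotProduct_add, dotProduct_smul, smul_eq_mul] at h2
    rw [← h2]
    congr 1
    rw [hw, Matrix.dotProduct_mulVec, ← Matrix.mulVec_transpose]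
  -- Rayleigh bound for Rd
  have bound1 : r * (v ⬝ᵥ v) ≤ v ⬝ᵥ (Rd *ᵥ v) := rayleigh_aux hRd.1 v
  -- Rayleigh bound for A Aᵀ
  set s2 := sigMin A ^ 2 with hs2
  have hs2eq : s2 = ⨅ i, (Matrix.isHermitian_mul_conjTranspose_self A).eigenvalues i := by
    rw [hs2, sigMin, Real.sq_sqrt]
    exact Real.iInf_nonneg (fun i => Matrix.eigenvalues_self_mul_conjTranspose_nonneg A i)
  have hAAT : Aᴴ = Aᵀ := by
    ext i j
    simp [Matrix.conjTranspose_apply]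
  have bound3 : s2 * (v ⬝ᵥ v) ≤ w ⬝ᵥ w := by
    have h0 := rayleigh_aux (Matrix.isHermitian_mul_conjTranspose_self A) v
    have h1 : v ⬝ᵥ ((A * Aᴴ) *ᵥ v) = w ⬝ᵥ w := by
      rw [hAAT, ← Matrix.mulVec_mulVec, Matrix.dotProduct_mulVec,
        ← Matrix.mulVec_transpose, hw]
    rw [h1] at h0
    rw [hs2eq]
    exact h0
  -- coordinatewise bound
  have bound2 : (w ⬝ᵥ w) / (μ + θ) ≤ w ⬝ᵥ u := by
    rw [dotProduct, dotProduct, Finset.sum_div]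
    apply Finset.sum_le_sum
    intro j _
    rw [div_le_iff₀ hμθ]
    have hwj : w j = u j * (μ + (d j)⁻¹) := eq1 j
    rw [hwj]
    have h1 := he_pos j
    have h2 := hθe j
    nlinarith [sq_nonneg (u j)]
  have bound2' : w ⬝ᵥ w ≤ (w ⬝ᵥ u) * (μ + θ) := (div_le_iff₀ hμθ).mp bound2
  have h4 : (w ⬝ᵥ u) * (μ + θ) ≤ (μ * (v ⬝ᵥ v) - r * (v ⬝ᵥ v)) * (μ + θ) :=
    mul_le_mul_of_nonneg_right (by linarith [bound1, key1]) hμθ.le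
  have h5 : s2 * (v ⬝ᵥ v) ≤ (μ * (μ + θ) - r * (μ + θ)) * (v ⬝ᵥ v) := by
    have hring : (μ * (v ⬝ᵥ v) - r * (v ⬝ᵥ v)) * (μ + θ)
        = (μ * (μ + θ) - r * (μ + θ)) * (v ⬝ᵥ v) := by ring
    linarith [bound3, bound2', h4, hring.le, hring.ge]
  have main : s2 + r * (μ + θ) ≤ μ * (μ + θ) := by
    have h6 : s2 ≤ μ * (μ + θ) - r * (μ + θ) := le_of_mul_le_mul_right h5 hnv
    linarith
  -- final algebra
  have hs2nn : 0 ≤ s2 := sq_nonneg _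
  have hμr : r ≤ μ := by nlinarith [main, hμθ, hs2nn]
  have hpos : 0 ≤ 2 * μ + θ - r := by linarith
  have hsq : (θ + r) ^ 2 + 4 * s2 ≤ (2 * μ + θ - r) ^ 2 := by nlinarith [main]
  have hsqrt : Real.sqrt ((θ + r) ^ 2 + 4 * s2) ≤ 2 * μ + θ - r := by
    calc Real.sqrt ((θ + r) ^ 2 + 4 * s2) ≤ Real.sqrt ((2 * μ + θ - r) ^ 2) :=
          Real.sqrt_le_sqrt hsq
      _ = 2 * μ + θ - r := Real.sqrt_sq hpos
  linarith [hsqrt]
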